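/- For every k ≥ 0 there holds E^δ(k+1) + (2ω/(α−1))·( k(α−3)(Φ^δ(x_k^δ) − Φ^δ(x_*)) − (k+α−1)²Δ(δ) ) ≤ E^δ(k), where Δ(δ) := c₁δ + c₂δ² with c₁ := 2ω̄³ωρ + 20ρω̄ and c₂ := 3 + (1/2)ω̄⁴ω² + (1/2)ωω̄². -/

import Mathlib

open Metric Filter
open scoped RealInnerProductSpace Topology

private theorem hasFDerivAt_half_norm_sq
    {X Y : Type*} [NormedAddCommGroup X] [InnerProductSpace ℝ X] [CompleteSpace X]
    [NormedAddCommGroup Y] [InnerProductSpace ℝ Y] [CompleteSpace Y]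
    {F : X → Y} {F' : X →L[ℝ] Y} {u : X} (hF : HasFDerivAt F F' u) (c : Y) :
    HasFDerivAt (fun v => (1/2 : ℝ) * ‖F v - c‖ ^ 2)
      ((innerSL ℝ) ((ContinuousLinearMap.adjoint F') (F u - c))) u := by
  have hm : HasFDerivAt (fun v => F v - c) F' u := hF.sub_const c
  have h2 := (HasFDerivAt.inner (𝕜 := ℝ) hm hm).const_mul (1/2 : ℝ)
  have hfun : (fun v => (1/2 : ℝ) * ⟪F v - c, F v - c⟫)
      = fun v => (1/2 : ℝ) * ‖F v - c‖ ^ 2 := by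
    funext v
    rw [real_inner_self_eq_norm_sq]
  rw [hfun] at h2
  refine h2.congr_fderiv ?_
  ext h
  simp only [innerSL_apply_apply, ContinuousLinearMap.adjoint_inner_left,
    ContinuousLinearMap.smul_apply, ContinuousLinearMap.coe_comp', Function.comp_apply,
    ContinuousLinearMap.prod_apply, fderivInnerCLM_apply, smul_eq_mul]
  rw [real_inner_comm (F u - c)]
  ring

private theorem convexOn_grad_ineq {X : Type*} [NormedAddCommGroup X] [InnerProductSpace ℝ X]
    {s : Set X} {f : X → ℝ} (hf : ConvexOn ℝ s f)
    {u v : X} (hu : u ∈ s) (hv : v ∈ s) {g : X}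
    (hd : HasFDerivAt f ((innerSL ℝ) g) u) :
    f u + ⟪g, v - u⟫ ≤ f v := by
  have h1 : HasDerivAt (fun t : ℝ => u + t • (v - u)) (v - u) 0 := by
    simpa using ((hasDerivAt_id (0:ℝ)).smul_const (v - u)).const_add u
  have hd' : HasFDerivAt f ((innerSL ℝ) g) ((fun t : ℝ => u + t • (v - u)) 0) := by
    simpa using hd
  have hq : HasDerivAt (fun t : ℝ => f (u + t • (v - u))) ⟪g, v - u⟫ 0 := by
    have h2 := hd'.comp_hasDerivAt 0 h1
    simpa [Function.comp_def] using h2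
  have htend : Tendsto (slope (fun t : ℝ => f (u + t • (v - u))) 0) (𝓝[>] (0:ℝ))
      (𝓝 ⟪g, v - u⟫) := by
    refine (hasDerivAt_iff_tendsto_slope.1 hq).mono_left (nhdsWithin_mono 0 ?_)
    intro t ht
    exact Set.mem_compl_singleton_iff.2 (ne_of_gt ht)
  have hle : ∀ᶠ t in 𝓝[>] (0:ℝ),
      slope (fun t : ℝ => f (u + t • (v - u))) 0 t ≤ f v - f u := by
    filter_upwards [Ioc_mem_nhdsGT_of_mem (Set.mem_Ico.2 ⟨le_refl (0:ℝ), zero_lt_one⟩)] with t ht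
    have h01 : 0 < t := ht.1
    have ht1 : t ≤ 1 := ht.2
    have hmem := hf.2 hu hv (by linarith : (0:ℝ) ≤ 1 - t) (le_of_lt h01) (by ring)
    have heq : (1-t) • u + t • v = u + t • (v - u) := by module
    rw [heq] at hmem
    rw [slope_def_field]
    simp only [zero_smul, add_zero, sub_zero]
    rw [div_le_iff₀ h01]
    simp only [smul_eq_mul] at hmem
    nlinarith [hmem]
  have := le_of_tendsto htend hle
  linarith

private theorem descent_ineq {X : Type*} [NormedAddCommGroup X] [InnerProductSpace ℝ X]
    {s : Set X} (hs : Convex ℝ s) {f : X → ℝ} {g : X → X} {L : ℝ} (hL : 0 ≤ L)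
    (hd : ∀ u ∈ s, HasFDerivAt f ((innerSL ℝ) (g u)) u)
    (hlip : ∀ u ∈ s, ∀ v ∈ s, ‖g u - g v‖ ≤ L * ‖u - v‖)
    {u v : X} (hu : u ∈ s) (hv : v ∈ s) :
    f v ≤ f u + ⟪g u, v - u⟫ + L / 2 * ‖v - u‖ ^ 2 := by
  set c : ℝ → X := fun t => u + t • (v - u) with hc
  have hcmem : ∀ t ∈ Set.Icc (0:ℝ) 1, c t ∈ s := by
    intro t ht
    have hmem := hs hu hv (by linarith [ht.2] : (0:ℝ) ≤ 1 - t) ht.1 (by ring)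
    have heq : (1-t) • u + t • v = c t := by rw [hc]; module
    rwa [heq] at hmem
  set h : ℝ → ℝ := fun t => f (c t) - t * ⟪g u, v - u⟫ - t^2 * (L/2 * ‖v - u‖^2) with hh
  have hder : ∀ t ∈ Set.Icc (0:ℝ) 1, HasDerivAt h
      (⟪g (c t), v - u⟫ - ⟪g u, v - u⟫ - 2*t*(L/2*‖v-u‖^2)) t := by
    intro t ht
    have h1 : HasDerivAt c (v - u) t := by
      rw [hc]; simpa using ((hasDerivAt_id t).smul_const (v - u)).const_add u
    have h2 : HasDerivAt (fun t => f (c t)) (⟪g (c t), v - u⟫) t := by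
      have := (hd (c t) (hcmem t ht)).comp_hasDerivAt t h1
      simpa [Function.comp_def] using this
    have h3 : HasDerivAt (fun t : ℝ => t * ⟪g u, v - u⟫) (⟪g u, v - u⟫) t := by
      simpa using (hasDerivAt_id t).mul_const ⟪g u, v - u⟫
    have h4 : HasDerivAt (fun t : ℝ => t^2 * (L/2*‖v-u‖^2)) (2*t*(L/2*‖v-u‖^2)) t := by
      have := (hasDerivAt_pow 2 t).mul_const (L/2*‖v-u‖^2)
      simpa [mul_comm, mul_assoc] using this
    exact (h2.sub h3).sub h4
  have hanti : AntitoneOn h (Set.Icc 0 1) := by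
    apply antitoneOn_of_deriv_nonpos (convex_Icc 0 1)
    · intro t ht
      exact (hder t ht).continuousAt.continuousWithinAt
    · intro t ht
      rw [interior_Icc] at ht
      exact ((hder t (Set.mem_Icc_of_Ioo ht)).differentiableAt).differentiableWithinAt
    · intro t ht
      rw [interior_Icc] at ht
      rw [(hder t (Set.mem_Icc_of_Ioo ht)).deriv]
      have hb1 : ⟪g (c t) - g u, v - u⟫ ≤ ‖g (c t) - g u‖ * ‖v - u‖ := real_inner_le_norm _ _
      have hb2 : ‖g (c t) - g u‖ ≤ L * ‖c t - u‖ := hlip (c t) (hcmem t (Set.mem_Icc_of_Ioo ht)) u hu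
      have hb3 : ‖c t - u‖ = t * ‖v - u‖ := by
        rw [hc]; simp [norm_smul, abs_of_pos ht.1]
      rw [hb3] at hb2
      have hb5 : ‖g (c t) - g u‖ * ‖v - u‖ ≤ (L * (t * ‖v - u‖)) * ‖v - u‖ :=
        mul_le_mul_of_nonneg_right hb2 (norm_nonneg _)
      have e : ⟪g (c t), v - u⟫ - ⟪g u, v - u⟫ = ⟪g (c t) - g u, v - u⟫ :=
        (inner_sub_left _ _ _).symm
      nlinarith [hb1, hb5]
  have hfin := hanti (Set.left_mem_Icc.2 zero_le_one) (Set.right_mem_Icc.2 zero_le_one) zero_le_one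
  have h0 : c 0 = u := by rw [hc]; simp
  have h1 : c 1 = v := by rw [hc]; simp
  rw [hh] at hfin
  simp only [h0, h1] at hfin
  norm_num at hfin
  linarith

set_option maxHeartbeats 1000000 in
/-- The energy inequality
`E^δ(k+1) + (2ω/(α−1))( k(α−3)(Φ^δ(x_k^δ) − Φ^δ(x_*)) − (k+α−1)²Δ(δ) ) ≤ E^δ(k)`. -/
theorem nesterov_energy_inequality
    {X Y : Type*} [NormedAddCommGroup X] [InnerProductSpace ℝ X] [CompleteSpace X]
    [NormedAddCommGroup Y] [InnerProductSpace ℝ Y] [CompleteSpace Y]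
    (x₀ : X) (ρ : ℝ) (hρ : 0 < ρ)
    (F : X → Y) (F' : X → X →L[ℝ] Y)
    (hF : ∀ u ∈ closedBall x₀ (6 * ρ), HasFDerivAt F (F' u) u)
    (ωb : ℝ) (hωb : ∀ u ∈ closedBall x₀ (6 * ρ), ‖F' u‖ ≤ ωb)
    (y : Y) (xstar : X) (hxstar : xstar ∈ closedBall x₀ ρ) (hFxstar : F xstar = y)
    (δ : ℝ) (yδ : Y) (hδ : ‖y - yδ‖ ≤ δ)
    -- the residual functionals
    (Φδ Φ0 : X → ℝ)
    (hΦδ : ∀ u, Φδ u = (1 / 2) * ‖F u - yδ‖ ^ 2)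
    (hΦ0 : ∀ u, Φ0 u = (1 / 2) * ‖F u - y‖ ^ 2)
    -- convexity and Lipschitz continuity of the exact gradient on `B_{6ρ}(x₀)`
    (hconv : ConvexOn ℝ (closedBall x₀ (6 * ρ)) Φ0)
    (L : ℝ) (hL : 0 < L)
    (hLip : ∀ u ∈ closedBall x₀ (6 * ρ), ∀ v ∈ closedBall x₀ (6 * ρ),
      ‖(ContinuousLinearMap.adjoint (F' u)) (F u - y) -
        (ContinuousLinearMap.adjoint (F' v)) (F v - y)‖ ≤ L * ‖u - v‖)
    (α ω : ℝ) (hα : 3 < α) (hω : 0 < ω) (hωL : ω < 1 / L)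
    -- `P` is the metric projection onto the closed ball `B_{2ρ}(x₀)`
    (P : X → X)
    (hP_mem : ∀ u, P u ∈ closedBall x₀ (2 * ρ))
    (hP_proj : ∀ u, ∀ v ∈ closedBall x₀ (2 * ρ), ‖u - P u‖ ≤ ‖u - v‖)
    -- the Nesterov iteration (with `x₋₁ = x₀` encoded via truncated subtraction)
    (x z : ℕ → X)
    (hx0 : x 0 = x₀)
    (hz : ∀ k : ℕ, z k = x k + (((k : ℝ) - 1) / ((k : ℝ) + α - 1)) • (x k - x (k - 1)))
    (hx : ∀ k : ℕ, x (k + 1) = P (z k + ω • (ContinuousLinearMap.adjoint (F' (z k))) (yδ - F (z k))))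
    -- the auxiliary sequence `w`, the energy `E`, and `Δ(δ)`
    (w : ℕ → X)
    (hw : ∀ k : ℕ, w k = x k + (((k : ℝ) - 1) / (α - 1)) • (x k - x (k - 1)))
    (E : ℕ → ℝ)
    (hE : ∀ k : ℕ, E k = (2 * ω / (α - 1)) * ((k : ℝ) + α - 2) ^ 2 * (Φδ (x k) - Φδ xstar)
      + (α - 1) * ‖w k - xstar‖ ^ 2)
    (c₁ c₂ Δ : ℝ)
    (hc₁ : c₁ = 2 * ωb ^ 3 * ω * ρ + 20 * ρ * ωb)
    (hc₂ : c₂ = 3 + (1 / 2) * ωb ^ 4 * ω ^ 2 + (1 / 2) * ω * ωb ^ 2)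
    (hΔ : Δ = c₁ * δ + c₂ * δ ^ 2) :
    ∀ k : ℕ,
      E (k + 1) + (2 * ω / (α - 1)) *
        ((k : ℝ) * (α - 3) * (Φδ (x k) - Φδ xstar) - ((k : ℝ) + α - 1) ^ 2 * Δ)
      ≤ E k := by
  intro k
  have hα1 : (0:ℝ) < α - 1 := by linarith
  have hωb0 : (0:ℝ) ≤ ωb := le_trans (norm_nonneg _) (hωb x₀ (mem_closedBall_self (by positivity)))
  have hδ0 : (0:ℝ) ≤ δ := le_trans (norm_nonneg _) hδ
  have hK : (0:ℝ) ≤ (k:ℝ) := Nat.cast_nonneg k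
  have hden : (0:ℝ) < (k:ℝ) + α - 1 := by linarith
  have ha' : α - 1 ≠ 0 := ne_of_gt hα1
  have hden' : (k:ℝ) + α - 1 ≠ 0 := ne_of_gt hden
  have hsub : closedBall x₀ (2*ρ) ⊆ closedBall x₀ (6*ρ) :=
    closedBall_subset_closedBall (by linarith)
  have hcx2 : Convex ℝ (closedBall x₀ (2*ρ)) := convex_closedBall _ _
  have hcx6 : Convex ℝ (closedBall x₀ (6*ρ)) := convex_closedBall _ _
  have hxmem : ∀ n : ℕ, x n ∈ closedBall x₀ (2*ρ) := by
    intro n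
    cases n with
    | zero => rw [hx0]; exact mem_closedBall_self (by positivity)
    | succ n => rw [hx n]; exact hP_mem _
  have hxs2 : xstar ∈ closedBall x₀ (2*ρ) :=
    closedBall_subset_closedBall (by linarith) hxstar
  have hxknorm : ‖x k - x₀‖ ≤ 2*ρ := by
    have := hxmem k; rwa [mem_closedBall, dist_eq_norm] at this
  have hxk1norm : ‖x (k-1) - x₀‖ ≤ 2*ρ := by
    have := hxmem (k-1); rwa [mem_closedBall, dist_eq_norm] at this
  have hzmem : z k ∈ closedBall x₀ (6*ρ) := by
    rw [mem_closedBall, dist_eq_norm, hz k]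
    have hc : |((k:ℝ) - 1)/((k:ℝ) + α - 1)| ≤ 1 := by
      rw [abs_div, abs_of_pos hden, div_le_one hden]
      rcases le_or_gt 1 (k:ℝ) with h | h
      · rw [abs_of_nonneg (by linarith)]; linarith
      · rw [abs_of_nonpos (by linarith)]; linarith
    have e : x k + (((k:ℝ) - 1)/((k:ℝ) + α - 1)) • (x k - x (k-1)) - x₀
        = (x k - x₀) + (((k:ℝ) - 1)/((k:ℝ) + α - 1)) • ((x k - x₀) - (x (k-1) - x₀)) := by
      module
    rw [e]
    have h1 := norm_add_le (x k - x₀)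
      ((((k:ℝ) - 1)/((k:ℝ) + α - 1)) • ((x k - x₀) - (x (k-1) - x₀)))
    rw [norm_smul, Real.norm_eq_abs] at h1
    have h2 := norm_sub_le (x k - x₀) (x (k-1) - x₀)
    have h3 : |((k:ℝ) - 1)/((k:ℝ) + α - 1)| * ‖(x k - x₀) - (x (k-1) - x₀)‖ ≤ 1 * (2*ρ + 2*ρ) :=
      mul_le_mul hc (by linarith) (norm_nonneg _) zero_le_one
    linarith
  obtain ⟨θ, hθdef⟩ : ∃ t : ℝ, t = (α - 1)/((k:ℝ) + α - 1) := ⟨_, rfl⟩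
  have hθpos : 0 < θ := by rw [hθdef]; exact div_pos hα1 hden
  have hθle1 : θ ≤ 1 := by rw [hθdef, div_le_one hden]; linarith
  obtain ⟨vv, hvvdef⟩ : ∃ v : X, v = (1 - θ) • x k + θ • xstar := ⟨_, rfl⟩
  have hvv2 : vv ∈ closedBall x₀ (2*ρ) := by
    rw [hvvdef]; exact hcx2 (hxmem k) hxs2 (by linarith) hθpos.le (by ring)
  have hvv6 : vv ∈ closedBall x₀ (6*ρ) := hsub hvv2
  have hxk6 : x k ∈ closedBall x₀ (6*ρ) := hsub (hxmem k)
  have hx16 : x (k+1) ∈ closedBall x₀ (6*ρ) := hsub (hxmem (k+1))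
  have hxs6 : xstar ∈ closedBall x₀ (6*ρ) := hsub hxs2
  -- gradient of Φ0
  have hgd0 : ∀ u ∈ closedBall x₀ (6*ρ), HasFDerivAt Φ0
      ((innerSL ℝ) ((ContinuousLinearMap.adjoint (F' u)) (F u - y))) u := by
    intro u hu
    exact (hasFDerivAt_half_norm_sq (hF u hu) y).congr_of_eventuallyEq
      (Filter.Eventually.of_forall hΦ0)
  -- descent and convexity inequalities
  have d1 : Φ0 (x (k+1)) ≤ Φ0 (z k)
      + ⟪(ContinuousLinearMap.adjoint (F' (z k))) (F (z k) - y), x (k+1) - z k⟫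
      + L / 2 * ‖x (k+1) - z k‖ ^ 2 :=
    descent_ineq hcx6 hL.le hgd0 hLip hzmem hx16
  have d2 : Φ0 (z k)
      + ⟪(ContinuousLinearMap.adjoint (F' (z k))) (F (z k) - y), vv - z k⟫ ≤ Φ0 vv :=
    convexOn_grad_ineq hconv hzmem hvv6 (hgd0 _ hzmem)
  have d3 : ⟪(ContinuousLinearMap.adjoint (F' (z k))) (F (z k) - y), x (k+1) - vv⟫
      = ⟪(ContinuousLinearMap.adjoint (F' (z k))) (F (z k) - y), x (k+1) - z k⟫
      - ⟪(ContinuousLinearMap.adjoint (F' (z k))) (F (z k) - y), vv - z k⟫ := by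
    rw [← inner_sub_right]; congr 1; abel
  -- MVT bound
  have hMVT : ∀ a ∈ closedBall x₀ (6*ρ), ∀ b ∈ closedBall x₀ (6*ρ),
      ‖F a - F b‖ ≤ ωb * ‖a - b‖ := by
    intro a ha b hb
    exact Convex.norm_image_sub_le_of_norm_hasFDerivWithin_le
      (fun u hu => (hF u hu).hasFDerivWithinAt) hωb hcx6 hb ha
  -- projection variational inequality
  obtain ⟨u0, hu0def⟩ : ∃ u : X,
      u = z k + ω • (ContinuousLinearMap.adjoint (F' (z k))) (yδ - F (z k)) := ⟨_, rfl⟩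
  have hxk1 : x (k+1) = P u0 := by rw [hu0def]; exact hx k
  haveI : Nonempty ↑(closedBall x₀ (2*ρ)) := ⟨⟨P u0, hP_mem u0⟩⟩
  have hinf : ‖u0 - P u0‖ = ⨅ w : closedBall x₀ (2*ρ), ‖u0 - w‖ := by
    apply le_antisymm
    · exact le_ciInf fun w => hP_proj u0 w w.2
    · exact ciInf_le ⟨0, by rintro b ⟨w, rfl⟩; exact norm_nonneg _⟩
        (⟨P u0, hP_mem u0⟩ : closedBall x₀ (2*ρ))
  have hproj0 := (norm_eq_iInf_iff_real_inner_le_zero hcx2 (hP_mem u0)).1 hinf vv hvv2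
  rw [← hxk1] at hproj0
  have hgneg : (ContinuousLinearMap.adjoint (F' (z k))) (yδ - F (z k))
      = -((ContinuousLinearMap.adjoint (F' (z k))) (F (z k) - yδ)) := by
    rw [← map_neg]; congr 1; abel
  have hu0e : u0 - x (k+1) = (z k - x (k+1))
      - ω • (ContinuousLinearMap.adjoint (F' (z k))) (F (z k) - yδ) := by
    rw [hu0def, hgneg]; module
  rw [hu0e, inner_sub_left, real_inner_smul_left] at hproj0
  have e5a : ⟪z k - x (k+1), x (k+1) - vv⟫ = -⟪z k - x (k+1), vv - x (k+1)⟫ := by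
    rw [← inner_neg_right]; congr 1; abel
  have e5b : ⟪(ContinuousLinearMap.adjoint (F' (z k))) (F (z k) - yδ), x (k+1) - vv⟫
      = -⟪(ContinuousLinearMap.adjoint (F' (z k))) (F (z k) - yδ), vv - x (k+1)⟫ := by
    rw [← inner_neg_right]; congr 1; abel
  have hd5pre : ω * ⟪(ContinuousLinearMap.adjoint (F' (z k))) (F (z k) - yδ), x (k+1) - vv⟫
      ≤ ⟪z k - x (k+1), x (k+1) - vv⟫ := by
    rw [e5a, e5b]; linarith only [hproj0]
  have htp : ‖z k - vv‖^2 = ‖x (k+1) - z k‖^2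
      + 2*⟪z k - x (k+1), x (k+1) - vv⟫ + ‖x (k+1) - vv‖^2 := by
    have e : z k - vv = (z k - x (k+1)) + (x (k+1) - vv) := by abel
    rw [e, norm_add_sq_real, norm_sub_rev (z k) (x (k+1))]
  have d5 : 2*ω*⟪(ContinuousLinearMap.adjoint (F' (z k))) (F (z k) - yδ), x (k+1) - vv⟫
      ≤ ‖z k - vv‖^2 - ‖x (k+1) - z k‖^2 - ‖x (k+1) - vv‖^2 := by
    linarith only [hd5pre, htp]
  -- noisy gradient vs exact gradient
  have hgdiff : (ContinuousLinearMap.adjoint (F' (z k))) (F (z k) - y)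
      - (ContinuousLinearMap.adjoint (F' (z k))) (F (z k) - yδ)
      = (ContinuousLinearMap.adjoint (F' (z k))) (yδ - y) := by
    rw [← map_sub]; congr 1; abel
  have hn1 : ⟪(ContinuousLinearMap.adjoint (F' (z k))) (F (z k) - y)
      - (ContinuousLinearMap.adjoint (F' (z k))) (F (z k) - yδ), x (k+1) - vv⟫
      ≤ ωb * δ * ‖x (k+1) - vv‖ := by
    rw [hgdiff, ContinuousLinearMap.adjoint_inner_left]
    have h1 : ⟪yδ - y, (F' (z k)) (x (k+1) - vv)⟫ ≤ ‖yδ - y‖ * ‖(F' (z k)) (x (k+1) - vv)‖ :=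
      real_inner_le_norm _ _
    have h2 : ‖(F' (z k)) (x (k+1) - vv)‖ ≤ ωb * ‖x (k+1) - vv‖ :=
      le_trans ((F' (z k)).le_opNorm _) (mul_le_mul_of_nonneg_right (hωb _ hzmem) (norm_nonneg _))
    have h3 : ‖yδ - y‖ ≤ δ := by rw [norm_sub_rev]; exact hδ
    have h4 : ‖yδ - y‖ * ‖(F' (z k)) (x (k+1) - vv)‖ ≤ δ * (ωb * ‖x (k+1) - vv‖) :=
      mul_le_mul h3 h2 (norm_nonneg _) hδ0
    linarith
  have d4 : ⟪(ContinuousLinearMap.adjoint (F' (z k))) (F (z k) - y), x (k+1) - vv⟫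
      ≤ ⟪(ContinuousLinearMap.adjoint (F' (z k))) (F (z k) - yδ), x (k+1) - vv⟫
      + ωb * δ * ‖x (k+1) - vv‖ := by
    have e := inner_sub_left (𝕜 := ℝ) ((ContinuousLinearMap.adjoint (F' (z k))) (F (z k) - y))
      ((ContinuousLinearMap.adjoint (F' (z k))) (F (z k) - yδ)) (x (k+1) - vv)
    linarith [hn1]
  -- relation between the noisy and exact functionals
  have hrelu : ∀ u : X, Φδ u = Φ0 u + ⟪F u - y, y - yδ⟫ + (1/2)*‖y - yδ‖^2 := by
    intro u
    rw [hΦδ, hΦ0]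
    have e : F u - yδ = (F u - y) + (y - yδ) := by abel
    rw [e, norm_add_sq_real]
    ring
  have hn2 : ⟪F (x (k+1)) - F vv, y - yδ⟫ ≤ ωb * δ * ‖x (k+1) - vv‖ := by
    have h1 := real_inner_le_norm (F (x (k+1)) - F vv) (y - yδ)
    have h2 : ‖F (x (k+1)) - F vv‖ * ‖y - yδ‖ ≤ (ωb * ‖x (k+1) - vv‖) * δ :=
      mul_le_mul (hMVT _ hx16 _ hvv6) hδ (norm_nonneg _) (mul_nonneg hωb0 (norm_nonneg _))
    linarith
  have d6 : Φδ (x (k+1)) - Φδ vv ≤ Φ0 (x (k+1)) - Φ0 vv + ωb * δ * ‖x (k+1) - vv‖ := by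
    have e : ⟪F (x (k+1)) - F vv, y - yδ⟫
        = ⟪F (x (k+1)) - y, y - yδ⟫ - ⟪F vv - y, y - yδ⟫ := by
      rw [← inner_sub_left]; congr 1; abel
    have r1 := hrelu (x (k+1)); have r2 := hrelu vv
    linarith [hn2]
  have hLω : L * ω ≤ 1 := by
    have := (lt_div_iff₀ hL).1 hωL
    linarith
  have d7 : 2*ω*(L/2*‖x (k+1) - z k‖^2) ≤ ‖x (k+1) - z k‖^2 := by
    have h := mul_nonneg (sub_nonneg.2 hLω) (sq_nonneg ‖x (k+1) - z k‖)
    nlinarith [h]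
  have st1 : Φ0 (x (k+1)) - Φ0 vv
      ≤ ⟪(ContinuousLinearMap.adjoint (F' (z k))) (F (z k) - y), x (k+1) - vv⟫
      + L/2*‖x (k+1) - z k‖^2 := by
    linarith only [d1, d2, d3]
  have st2 : Φδ (x (k+1)) - Φδ vv
      ≤ ⟪(ContinuousLinearMap.adjoint (F' (z k))) (F (z k) - yδ), x (k+1) - vv⟫
      + 2*ωb*δ*‖x (k+1) - vv‖ + L/2*‖x (k+1) - z k‖^2 := by
    linarith only [st1, d4, d6]
  have st3 := mul_le_mul_of_nonneg_left st2 (show (0:ℝ) ≤ 2*ω by linarith)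
  have star : 2*ω*(Φδ (x (k+1)) - Φδ vv) ≤ ‖z k - vv‖^2 - ‖x (k+1) - vv‖^2
      + 2*ω*(2*ωb*δ*‖x (k+1) - vv‖) := by
    have hexp : 2*ω*(⟪(ContinuousLinearMap.adjoint (F' (z k))) (F (z k) - yδ), x (k+1) - vv⟫
        + 2*ωb*δ*‖x (k+1) - vv‖ + L/2*‖x (k+1) - z k‖^2)
        = 2*ω*⟪(ContinuousLinearMap.adjoint (F' (z k))) (F (z k) - yδ), x (k+1) - vv⟫
        + 2*ω*(2*ωb*δ*‖x (k+1) - vv‖) + 2*ω*(L/2*‖x (k+1) - z k‖^2) := by ring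
    rw [hexp] at st3
    linarith only [st3, d5, d7]
  -- convexity-with-noise at vv
  have hψvv : Φ0 vv ≤ (1-θ) * Φ0 (x k) + θ * Φ0 xstar := by
    have h := hconv.2 hxk6 hxs6 (show (0:ℝ) ≤ 1-θ by linarith) hθpos.le (by ring)
    rw [hvvdef]
    simpa [smul_eq_mul] using h
  have hvvxk : vv - x k = θ • (xstar - x k) := by rw [hvvdef]; module
  have hvvxs : vv - xstar = (1-θ) • (x k - xstar) := by rw [hvvdef]; module
  have hdist3 : ‖x k - xstar‖ ≤ 3*ρ := by
    have h2 : ‖xstar - x₀‖ ≤ ρ := by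
      have := hxstar; rwa [mem_closedBall, dist_eq_norm] at this
    calc ‖x k - xstar‖ = ‖(x k - x₀) - (xstar - x₀)‖ := by rw [sub_sub_sub_cancel_right]
      _ ≤ ‖x k - x₀‖ + ‖xstar - x₀‖ := norm_sub_le _ _
      _ ≤ 3*ρ := by linarith
  have bn1 : ⟪F vv - F (x k), y - yδ⟫ ≤ ωb * (θ * (3*ρ)) * δ := by
    have h1 := real_inner_le_norm (F vv - F (x k)) (y - yδ)
    have h2 : ‖vv - x k‖ ≤ θ * (3*ρ) := by
      rw [hvvxk, norm_smul, Real.norm_eq_abs, abs_of_pos hθpos, norm_sub_rev xstar (x k)]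
      exact mul_le_mul_of_nonneg_left hdist3 hθpos.le
    have h3 : ‖F vv - F (x k)‖ ≤ ωb * (θ*(3*ρ)) :=
      le_trans (hMVT _ hvv6 _ hxk6) (mul_le_mul_of_nonneg_left h2 hωb0)
    have h4 : ‖F vv - F (x k)‖ * ‖y - yδ‖ ≤ (ωb * (θ*(3*ρ))) * δ :=
      mul_le_mul h3 hδ (norm_nonneg _)
        (mul_nonneg hωb0 (mul_nonneg hθpos.le (by linarith)))
    linarith
  have bn2 : ⟪F vv - F xstar, y - yδ⟫ ≤ ωb * ((1-θ) * (3*ρ)) * δ := by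
    have h1 := real_inner_le_norm (F vv - F xstar) (y - yδ)
    have h2 : ‖vv - xstar‖ ≤ (1-θ) * (3*ρ) := by
      rw [hvvxs, norm_smul, Real.norm_eq_abs, abs_of_nonneg (show (0:ℝ) ≤ 1-θ by linarith)]
      exact mul_le_mul_of_nonneg_left hdist3 (by linarith)
    have h3 : ‖F vv - F xstar‖ ≤ ωb * ((1-θ)*(3*ρ)) :=
      le_trans (hMVT _ hvv6 _ hxs6) (mul_le_mul_of_nonneg_left h2 hωb0)
    have h4 : ‖F vv - F xstar‖ * ‖y - yδ‖ ≤ (ωb * ((1-θ)*(3*ρ))) * δ :=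
      mul_le_mul h3 hδ (norm_nonneg _)
        (mul_nonneg hωb0 (mul_nonneg (by linarith) (by linarith)))
    linarith
  have hφvv : Φδ vv ≤ (1-θ)*Φδ (x k) + θ*Φδ xstar + 6*θ*ρ*ωb*δ := by
    have hsplit : ⟪F vv - y, y - yδ⟫
        = (1-θ)*⟪F vv - F (x k), y - yδ⟫ + θ*⟪F vv - F xstar, y - yδ⟫
        + ((1-θ)*⟪F (x k) - y, y - yδ⟫ + θ*⟪F xstar - y, y - yδ⟫) := by
      rw [show F vv - y = ((1-θ) • (F vv - F (x k)) + θ • (F vv - F xstar))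
          + ((1-θ) • (F (x k) - y) + θ • (F xstar - y)) from by module]
      simp only [inner_add_left, real_inner_smul_left]
    have bn1' := mul_le_mul_of_nonneg_left bn1 (show (0:ℝ) ≤ 1-θ by linarith)
    have bn2' := mul_le_mul_of_nonneg_left bn2 hθpos.le
    have hq0 : (0:ℝ) ≤ θ*θ*(ρ*(ωb*δ)) :=
      mul_nonneg (mul_nonneg hθpos.le hθpos.le)
        (mul_nonneg hρ.le (mul_nonneg hωb0 hδ0))
    have r1 := hrelu vv; have r2 := hrelu (x k); have r3 := hrelu xstar
    have r2' : θ*Φδ (x k) = θ*Φ0 (x k) + θ*⟪F (x k) - y, y - yδ⟫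
        + θ*((1/2)*‖y - yδ‖^2) := by rw [r2]; ring
    have r3' : θ*Φδ xstar = θ*Φ0 xstar + θ*⟪F xstar - y, y - yδ⟫
        + θ*((1/2)*‖y - yδ‖^2) := by rw [r3]; ring
    linarith only [hψvv, bn1', bn2', hsplit, hq0, r1, r2, r3, r2', r3']
  have s1 : 2*ω*(Φδ (x (k+1)) - Φδ xstar)
      ≤ 2*ω*((1-θ)*(Φδ (x k) - Φδ xstar)) + 2*ω*(6*θ*ρ*ωb*δ)
      + 2*ω*(2*ωb*δ*‖x (k+1) - vv‖)
      + (‖z k - vv‖^2 - ‖x (k+1) - vv‖^2) := by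
    have h := mul_le_mul_of_nonneg_left hφvv (show (0:ℝ) ≤ 2*ω by linarith)
    have hexp2 : 2*ω*((1-θ)*Φδ (x k) + θ*Φδ xstar + 6*θ*ρ*ωb*δ)
        = 2*ω*((1-θ)*Φδ (x k)) + 2*ω*(θ*Φδ xstar) + 2*ω*(6*θ*ρ*ωb*δ) := by ring
    rw [hexp2] at h
    linarith only [star, h]
  -- the w-identities
  have hw1 : (α-1) • (w k - xstar) = ((k:ℝ)+α-1) • (z k - vv) := by
    rw [hw k, hz k, hvvdef, hθdef]
    match_scalars <;> field_simp <;> ring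
  have hwk1e := hw (k+1)
  rw [Nat.add_sub_cancel] at hwk1e
  have hke : ((k+1 : ℕ) : ℝ) = (k:ℝ)+1 := by push_cast; ring
  rw [hke] at hwk1e
  have hw2 : (α-1) • (w (k+1) - xstar) = ((k:ℝ)+α-1) • (x (k+1) - vv) := by
    rw [hwk1e, hvvdef, hθdef]
    match_scalars <;> field_simp <;> ring
  have hB1 : (α-1)^2 * ‖w k - xstar‖^2 = ((k:ℝ)+α-1)^2 * ‖z k - vv‖^2 := by
    have h := congrArg norm hw1
    rw [norm_smul, norm_smul, Real.norm_eq_abs, Real.norm_eq_abs,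
      abs_of_pos hα1, abs_of_pos hden] at h
    rw [← mul_pow, ← mul_pow, h]
  have hB2 : (α-1)^2 * ‖w (k+1) - xstar‖^2 = ((k:ℝ)+α-1)^2 * ‖x (k+1) - vv‖^2 := by
    have h := congrArg norm hw2
    rw [norm_smul, norm_smul, Real.norm_eq_abs, Real.norm_eq_abs,
      abs_of_pos hα1, abs_of_pos hden] at h
    rw [← mul_pow, ← mul_pow, h]
  -- crude bounds
  have hnv4 : ‖x (k+1) - vv‖ ≤ 4*ρ := by
    have h1 : ‖x (k+1) - x₀‖ ≤ 2*ρ := by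
      have := hxmem (k+1); rwa [mem_closedBall, dist_eq_norm] at this
    have h2 : ‖vv - x₀‖ ≤ 2*ρ := by
      have := hvv2; rwa [mem_closedBall, dist_eq_norm] at this
    calc ‖x (k+1) - vv‖ = ‖(x (k+1) - x₀) - (vv - x₀)‖ := by rw [sub_sub_sub_cancel_right]
      _ ≤ ‖x (k+1) - x₀‖ + ‖vv - x₀‖ := norm_sub_le _ _
      _ ≤ 4*ρ := by linarith
  have hA2 : -(δ^2/2) ≤ Φδ (x k) - Φδ xstar := by
    have h1 : Φδ xstar ≤ δ^2/2 := by
      rw [hΦδ, hFxstar]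
      have h2 : ‖y - yδ‖^2 ≤ δ^2 := pow_le_pow_left₀ (norm_nonneg _) hδ 2
      linarith
    have h2 : 0 ≤ Φδ (x k) := by rw [hΦδ]; positivity
    linarith
  have q2 : (0:ℝ) ≤ ρ*(ωb*δ) := mul_nonneg hρ.le (mul_nonneg hωb0 hδ0)
  have t7 : δ^2/2 + 14*(ρ*(ωb*δ)) ≤ Δ := by
    rw [hΔ, hc₁, hc₂]
    have q1 : (0:ℝ) ≤ ωb^3*ω*ρ*δ :=
      mul_nonneg (mul_nonneg (mul_nonneg (pow_nonneg hωb0 3) hω.le) hρ.le) hδ0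
    have q3 : (0:ℝ) ≤ ωb^4*ω^2*δ^2 :=
      mul_nonneg (mul_nonneg (pow_nonneg hωb0 4) (sq_nonneg ω)) (sq_nonneg δ)
    have q4 : (0:ℝ) ≤ ω*ωb^2*δ^2 :=
      mul_nonneg (mul_nonneg hω.le (sq_nonneg ωb)) (sq_nonneg δ)
    linarith only [q1, q2, q3, q4, sq_nonneg δ]
  have t1 : (α-2)^2 ≤ ((k:ℝ)+α-1)^2 := by
    have h := mul_nonneg (show (0:ℝ) ≤ (k:ℝ)+1 by linarith)
      (show (0:ℝ) ≤ (k:ℝ)+2*α-3 by linarith)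
    linarith only [h]
  have u0b : -(α-2)^2*(Φδ (x k) - Φδ xstar) ≤ (α-2)^2*(δ^2/2) := by
    have h := mul_le_mul_of_nonneg_left
      (show -(Φδ (x k) - Φδ xstar) ≤ δ^2/2 by linarith [hA2]) (sq_nonneg (α-2))
    linarith only [h]
  have u1 : (α-2)^2*(δ^2/2) ≤ ((k:ℝ)+α-1)^2*(δ^2/2) :=
    mul_le_mul_of_nonneg_right t1 (by positivity)
  have u2 : 2*((k:ℝ)+α-1)^2*ωb*δ*‖x (k+1) - vv‖ ≤ 2*((k:ℝ)+α-1)^2*ωb*δ*(4*ρ) := by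
    apply mul_le_mul_of_nonneg_left hnv4
    exact mul_nonneg (mul_nonneg (by positivity) hωb0) hδ0
  have hbr : -(α-2)^2*(Φδ (x k) - Φδ xstar) + 6*(α-1)*(((k:ℝ)+α-1)*(ρ*(ωb*δ)))
      + 2*((k:ℝ)+α-1)^2*ωb*δ*‖x (k+1) - vv‖ ≤ ((k:ℝ)+α-1)^2*Δ := by
    have u3 : (α-1)*(((k:ℝ)+α-1)*(ρ*(ωb*δ)))
        ≤ ((k:ℝ)+α-1)*(((k:ℝ)+α-1)*(ρ*(ωb*δ))) :=
      mul_le_mul_of_nonneg_right (show α-1 ≤ (k:ℝ)+α-1 by linarith)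
        (mul_nonneg hden.le q2)
    have u4 := mul_le_mul_of_nonneg_left t7 (show (0:ℝ) ≤ ((k:ℝ)+α-1)^2 by positivity)
    linarith only [u0b, u1, u2, u3, u4]
  -- scale s1
  obtain ⟨q, hqdef⟩ : ∃ t : ℝ, t = 2*ω/(α-1) := ⟨_, rfl⟩
  have hqpos : (0:ℝ) ≤ q := by
    rw [hqdef]; exact div_nonneg (by linarith) hα1.le
  have hc0 : (0:ℝ) ≤ (((k:ℝ)+α-1)^2/(α-1)) := div_nonneg (by positivity) hα1.le
  have cs1 := mul_le_mul_of_nonneg_left s1 hc0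
  have cexp : (((k:ℝ)+α-1)^2/(α-1)) * (2*ω*((1-θ)*(Φδ (x k) - Φδ xstar)) + 2*ω*(6*θ*ρ*ωb*δ)
        + 2*ω*(2*ωb*δ*‖x (k+1) - vv‖)
        + (‖z k - vv‖^2 - ‖x (k+1) - vv‖^2))
      = (((k:ℝ)+α-1)^2/(α-1)) * (2*ω*((1-θ)*(Φδ (x k) - Φδ xstar)))
      + (((k:ℝ)+α-1)^2/(α-1)) * (2*ω*(6*θ*ρ*ωb*δ))
      + (((k:ℝ)+α-1)^2/(α-1)) * (2*ω*(2*ωb*δ*‖x (k+1) - vv‖))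
      + (((k:ℝ)+α-1)^2/(α-1)) * ‖z k - vv‖^2
      - (((k:ℝ)+α-1)^2/(α-1)) * ‖x (k+1) - vv‖^2 := by ring
  have eL : (((k:ℝ)+α-1)^2/(α-1)) * (2*ω*(Φδ (x (k+1)) - Φδ xstar))
      = q * ((((k:ℝ)+α-1))^2 * (Φδ (x (k+1)) - Φδ xstar)) := by
    rw [hqdef]; field_simp
  have e1 : (((k:ℝ)+α-1)^2/(α-1)) * (2*ω*((1-θ)*(Φδ (x k) - Φδ xstar)))
      = q * ((k:ℝ)*((k:ℝ)+α-1)*(Φδ (x k) - Φδ xstar)) := by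
    rw [hqdef, hθdef]; field_simp; ring
  have e2 : (((k:ℝ)+α-1)^2/(α-1)) * (2*ω*(6*θ*ρ*ωb*δ))
      = q * (6*(α-1)*(((k:ℝ)+α-1)*(ρ*(ωb*δ)))) := by
    rw [hqdef, hθdef]; field_simp
  have e4 : (((k:ℝ)+α-1)^2/(α-1)) * (2*ω*(2*ωb*δ*‖x (k+1) - vv‖))
      = q * (2*((k:ℝ)+α-1)^2*ωb*δ*‖x (k+1) - vv‖) := by
    rw [hqdef]; field_simp
  have e3z : (((k:ℝ)+α-1)^2/(α-1)) * ‖z k - vv‖^2 = (α-1)*‖w k - xstar‖^2 := by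
    rw [div_mul_eq_mul_div, div_eq_iff ha', ← hB1]; ring
  have e3n : (((k:ℝ)+α-1)^2/(α-1)) * ‖x (k+1) - vv‖^2 = (α-1)*‖w (k+1) - xstar‖^2 := by
    rw [div_mul_eq_mul_div, div_eq_iff ha', ← hB2]; ring
  rw [cexp, eL, e1, e2, e4, e3z, e3n] at cs1
  have mq := mul_le_mul_of_nonneg_left hbr hqpos
  rw [hE, hE, ← hqdef]
  push_cast
  linarith only [cs1, mq]
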